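/- Let T > 0, r ∈ ℝ, let γ : ℝ → ℝ be any function, let 0 ≤ t < T and s, u ∈ ℝ be fixed, and regard the modified Black–Scholes price of the floating-strike geometric Asian call C₀ = γ(t) e^s [N(d₁(σ̄)) − e^{u/T − Q(σ̄)} N(d₂(σ̄))] as a function of the volatility parameter σ̄ > 0 (with d₁, d₂, Q depending on σ̄ as below). Then its derivative with respect to σ̄ (the Asian vega) equals ∂C₀/∂σ̄ = γ(t) e^{s + u/T − Q} [ (1/T)√((T³ − t³)/3) Φ(d₂) + σ̄ (T − t)² (T + 2t) N(d₂) / (6T²) ]. -/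

import Mathlib

/-- Partial derivative in the first (time) variable. -/
noncomputable def pdT (F : ℝ → ℝ → ℝ → ℝ) (t s u : ℝ) : ℝ := deriv (fun x => F x s u) t

/-- Partial derivative in the second (log-price) variable. -/
noncomputable def pdS (F : ℝ → ℝ → ℝ → ℝ) (t s u : ℝ) : ℝ := deriv (fun x => F t x u) s

/-- Partial derivative in the third (average) variable. -/
noncomputable def pdU (F : ℝ → ℝ → ℝ → ℝ) (t s u : ℝ) : ℝ := deriv (fun x => F t s x) u

/-- Standard normal cumulative distribution function. -/
noncomputable def stdN (x : ℝ) : ℝ :=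
  ∫ y in Set.Iic x, Real.exp (-(y ^ 2) / 2) / Real.sqrt (2 * Real.pi)

/-- Standard normal probability density function. -/
noncomputable def stdPhi (x : ℝ) : ℝ := Real.exp (-(x ^ 2) / 2) / Real.sqrt (2 * Real.pi)

/-- `d₁` for the floating-strike geometric Asian call. -/
noncomputable def dOne (T r σ t u : ℝ) : ℝ :=
  (-u + (r + σ ^ 2 / 2) * (T ^ 2 - t ^ 2) / 2) / (σ * Real.sqrt ((T ^ 3 - t ^ 3) / 3))

/-- `d₂` for the floating-strike geometric Asian call. -/
noncomputable def dTwo (T r σ t u : ℝ) : ℝ :=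
  dOne T r σ t u - (σ / T) * Real.sqrt ((T ^ 3 - t ^ 3) / 3)

/-- The quantity `Q` appearing in the geometric Asian option formulas. -/
noncomputable def Qfl (T r σ t : ℝ) : ℝ :=
  (r + σ ^ 2 / 2) * (T ^ 2 - t ^ 2) / (2 * T) - σ ^ 2 * (T ^ 3 - t ^ 3) / (6 * T ^ 2)

lemma integrable_stdPhi : MeasureTheory.Integrable stdPhi := by
  have h : MeasureTheory.Integrable (fun y : ℝ => Real.exp (-(1/2 : ℝ) * y ^ 2)) :=
    integrable_exp_neg_mul_sq (by norm_num)
  have h2 := h.div_const (Real.sqrt (2 * Real.pi))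
  refine h2.congr ?_
  filter_upwards with y
  unfold stdPhi
  ring_nf

lemma continuous_stdPhi : Continuous stdPhi := by
  unfold stdPhi
  fun_prop

lemma hasDerivAt_stdN (x : ℝ) : HasDerivAt stdN (stdPhi x) x := by
  have hint := integrable_stdPhi
  have key : ∀ z : ℝ, stdN z = stdN 0 + ∫ y in (0:ℝ)..z, stdPhi y := by
    intro z
    rw [← intervalIntegral.integral_Iic_sub_Iic hint.integrableOn hint.integrableOn]
    unfold stdN stdPhi
    ring
  have h : HasDerivAt (fun z : ℝ => stdN 0 + ∫ y in (0:ℝ)..z, stdPhi y) (stdPhi x) x :=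
    (intervalIntegral.integral_hasDerivAt_right hint.intervalIntegrable
      (continuous_stdPhi.stronglyMeasurableAtFilter _ _)
      continuous_stdPhi.continuousAt).const_add (stdN 0)
  exact (funext key : stdN = _) ▸ h

theorem stmt11 (T r : ℝ) (hT : 0 < T) (γ : ℝ → ℝ) (t s u : ℝ)
    (ht0 : 0 ≤ t) (htT : t < T) (σ : ℝ) (hσ : 0 < σ) :
    deriv (fun x : ℝ => γ t * Real.exp s * (stdN (dOne T r x t u) -
        Real.exp (u / T - Qfl T r x t) * stdN (dTwo T r x t u))) σ =
      γ t * Real.exp (s + u / T - Qfl T r σ t) *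
        ((1 / T) * Real.sqrt ((T ^ 3 - t ^ 3) / 3) * stdPhi (dTwo T r σ t u) +
          σ * (T - t) ^ 2 * (T + 2 * t) * stdN (dTwo T r σ t u) / (6 * T ^ 2)) := by
  have ht3 : (0:ℝ) < (T ^ 3 - t ^ 3) / 3 := by
    have : t ^ 3 < T ^ 3 := pow_lt_pow_left₀ htT ht0 (by norm_num)
    linarith
  set A := Real.sqrt ((T ^ 3 - t ^ 3) / 3) with hAdef
  have hA : 0 < A := Real.sqrt_pos.mpr ht3
  have hA2 : A ^ 2 = (T ^ 3 - t ^ 3) / 3 := Real.sq_sqrt ht3.le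
  have hσA : σ * A ≠ 0 := by positivity
  have hx2 : HasDerivAt (fun x : ℝ => x ^ 2) (2 * σ) σ := by
    simpa using hasDerivAt_pow 2 σ
  -- derivative of d1
  have hnum : HasDerivAt (fun x : ℝ => -u + (r + x ^ 2 / 2) * (T ^ 2 - t ^ 2) / 2)
      (σ * (T ^ 2 - t ^ 2) / 2) σ := by
    have h := ((((hx2.div_const 2).const_add r).mul_const (T ^ 2 - t ^ 2)).div_const 2).const_add (-u)
    exact h.congr_deriv (by ring)
  have hden : HasDerivAt (fun x : ℝ => x * A) A σ := by
    simpa using (hasDerivAt_id σ).mul_const A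
  have hd1 : HasDerivAt (fun x : ℝ => dOne T r x t u)
      ((σ * (T ^ 2 - t ^ 2) / 2 * (σ * A) - (-u + (r + σ ^ 2 / 2) * (T ^ 2 - t ^ 2) / 2) * A)
        / (σ * A) ^ 2) σ := by
    have h := hnum.div hden hσA
    exact h
  have hd2 : HasDerivAt (fun x : ℝ => dTwo T r x t u)
      ((σ * (T ^ 2 - t ^ 2) / 2 * (σ * A) - (-u + (r + σ ^ 2 / 2) * (T ^ 2 - t ^ 2) / 2) * A)
        / (σ * A) ^ 2 - 1 / T * A) σ := by
    have hlin : HasDerivAt (fun x : ℝ => x / T * A) (1 / T * A) σ := by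
      have := ((hasDerivAt_id σ).div_const T).mul_const A
      exact this.congr_deriv (by ring)
    have h := hd1.sub hlin
    exact h
  -- derivative of Q
  have hQ : HasDerivAt (fun x : ℝ => Qfl T r x t)
      (σ * (T ^ 2 - t ^ 2) / (2 * T) - σ * (T ^ 3 - t ^ 3) / (3 * T ^ 2)) σ := by
    have h1 := (((hx2.div_const 2).const_add r).mul_const (T ^ 2 - t ^ 2)).div_const (2 * T)
    have h2 := (hx2.mul_const (T ^ 3 - t ^ 3)).div_const (6 * T ^ 2)
    have h := h1.sub h2
    have h' : HasDerivAt (fun x : ℝ => Qfl T r x t)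
        (2 * σ / 2 * (T ^ 2 - t ^ 2) / (2 * T) - 2 * σ * (T ^ 3 - t ^ 3) / (6 * T ^ 2)) σ := by
      exact h
    refine h'.congr_deriv ?_
    field_simp
    ring
  have hP : HasDerivAt (fun x : ℝ => Real.exp (u / T - Qfl T r x t))
      (Real.exp (u / T - Qfl T r σ t) *
        -(σ * (T ^ 2 - t ^ 2) / (2 * T) - σ * (T ^ 3 - t ^ 3) / (3 * T ^ 2))) σ :=
    (hQ.const_sub (u / T)).exp
  have hN1 : HasDerivAt (fun x : ℝ => stdN (dOne T r x t u))
      (stdPhi (dOne T r σ t u) *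
        ((σ * (T ^ 2 - t ^ 2) / 2 * (σ * A) - (-u + (r + σ ^ 2 / 2) * (T ^ 2 - t ^ 2) / 2) * A)
          / (σ * A) ^ 2)) σ :=
    (hasDerivAt_stdN _).comp σ hd1
  have hN2 : HasDerivAt (fun x : ℝ => stdN (dTwo T r x t u))
      (stdPhi (dTwo T r σ t u) *
        ((σ * (T ^ 2 - t ^ 2) / 2 * (σ * A) - (-u + (r + σ ^ 2 / 2) * (T ^ 2 - t ^ 2) / 2) * A)
          / (σ * A) ^ 2 - 1 / T * A)) σ :=
    (hasDerivAt_stdN _).comp σ hd2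
  have htotal := ((hN1.sub (hP.mul hN2)).const_mul (γ t * Real.exp s))
  rw [HasDerivAt.deriv (f := fun x : ℝ => γ t * Real.exp s * (stdN (dOne T r x t u) -
        Real.exp (u / T - Qfl T r x t) * stdN (dTwo T r x t u))) htotal]
  -- key Gaussian identity
  have hmul : dOne T r σ t u * (σ * A) = -u + (r + σ ^ 2 / 2) * (T ^ 2 - t ^ 2) / 2 := by
    rw [dOne, ← hAdef]
    field_simp
  have hd2eq : dTwo T r σ t u = dOne T r σ t u - σ / T * A := by
    rw [dTwo, ← hAdef]
  have hexp : -(dOne T r σ t u ^ 2) / 2 =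
      (u / T - Qfl T r σ t) + -(dTwo T r σ t u ^ 2) / 2 := by
    rw [hd2eq, Qfl]
    linear_combination (-(1:ℝ)/T) * hmul + σ ^ 2 / (2 * T ^ 2) * hA2
  have hkey : stdPhi (dOne T r σ t u) =
      Real.exp (u / T - Qfl T r σ t) * stdPhi (dTwo T r σ t u) := by
    unfold stdPhi
    rw [hexp, Real.exp_add]
    ring
  rw [hkey, show s + u / T - Qfl T r σ t = s + (u / T - Qfl T r σ t) by ring, Real.exp_add]
  have hT' : (T:ℝ) ≠ 0 := ne_of_gt hT
  field_simp
  ring
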